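/- arXiv:1809.04242 — 2 statements merged into one kernel-verified Lean document; each statement's English description precedes it below -/
import Mathlib

section
/- Let n ≥ 1, let 1 ≤ m < n, and let w, u be permutations of {1,2,…,n} such that w →^{r_m} u, witnessed by pairs (a_1,b_1),…,(a_s,b_s) with s = ℓ(u) − ℓ(w), a_i ≤ m < b_i, b_1,…,b_s pairwise distinct, u = wτ_{a_1b_1}⋯τ_{a_sb_s}, and ℓ(wτ_{a_1b_1}⋯τ_{a_ib_i}) = ℓ(w) + i for all i. Then {b : m < b ≤ n and w(b) > u(b)} = {b_1,…,b_s}; in particular this set has exactly s = ℓ(u) − ℓ(w) elements. -/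
/-- The length (number of inversions) of a permutation of `Fin n`
(representing `{1,…,n}` with `i : Fin n` standing for `i+1`). -/
def invLength {n : ℕ} (w : Equiv.Perm (Fin n)) : ℕ :=
  (Finset.univ.filter fun p : Fin n × Fin n => p.1 < p.2 ∧ w p.2 < w p.1).card

/-- `w τ_{a₁b₁} ⋯ τ_{aₛbₛ}` for the list of pairs `L = [(a₁,b₁),…,(aₛ,bₛ)]`. -/
def chainProd {n : ℕ} (w : Equiv.Perm (Fin n)) (L : List (Fin n × Fin n)) :
    Equiv.Perm (Fin n) :=
  w * (L.map fun p => Equiv.swap p.1 p.2).prod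

/-- The list `L = [(a₁,b₁),…,(aₛ,bₛ)]` is a chain witnessing `w ≤ₘ u`:
each `aᵢ ≤ m < bᵢ` (in 1-indexed terms, i.e. `(aᵢ : ℕ) < m ≤ (bᵢ : ℕ)` in 0-indexed `Fin n`),
`u = w τ_{a₁b₁} ⋯ τ_{aₛbₛ}`, and `ℓ(w τ_{a₁b₁} ⋯ τ_{aᵢbᵢ}) = ℓ(w) + i` for all `i ≤ s`. -/
def IsMChain {n : ℕ} (m : ℕ) (w u : Equiv.Perm (Fin n)) (L : List (Fin n × Fin n)) : Prop :=
  (∀ p ∈ L, (p.1 : ℕ) < m ∧ m ≤ (p.2 : ℕ)) ∧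
  u = chainProd w L ∧
  ∀ i, i ≤ L.length → invLength (chainProd w (L.take i)) = invLength w + i

/-- The `m`-Bruhat order `w ≤ₘ u`. -/
def mBruhat {n : ℕ} (m : ℕ) (w u : Equiv.Perm (Fin n)) : Prop :=
  ∃ L, IsMChain m w u L

/-- `w →^{r_m} u` : as `w ≤ₘ u`, with the `bᵢ` pairwise distinct. -/
def rmRel {n : ℕ} (m : ℕ) (w u : Equiv.Perm (Fin n)) : Prop :=
  ∃ L, IsMChain m w u L ∧ (L.map Prod.snd).Nodup

def Phi {n : ℕ} (a b : Fin n) (p : Fin n × Fin n) : Fin n × Fin n :=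
  if p.1 < a ∧ (p.2 = a ∨ p.2 = b) then (p.1, Equiv.swap a b p.2)
  else if b < p.2 ∧ (p.1 = a ∨ p.1 = b) then (Equiv.swap a b p.1, p.2)
  else p

lemma Phi_def {n : ℕ} (a b i j : Fin n) : Phi a b (i, j) =
    if i < a ∧ (j = a ∨ j = b) then (i, Equiv.swap a b j)
    else if b < j ∧ (i = a ∨ i = b) then (Equiv.swap a b i, j)
    else (i, j) := rfl

lemma Phi_invol {n : ℕ} (a b : Fin n) (hab : a < b) (p : Fin n × Fin n) :
    Phi a b (Phi a b p) = p := by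
  obtain ⟨i, j⟩ := p
  by_cases h1 : i < a ∧ (j = a ∨ j = b)
  · obtain ⟨hia, hj | hj⟩ := h1
    · rw [Phi_def a b i j, if_pos ⟨hia, Or.inl hj⟩, hj, Equiv.swap_apply_left, Phi_def,
        if_pos ⟨hia, Or.inr rfl⟩, Equiv.swap_apply_right]
    · rw [Phi_def a b i j, if_pos ⟨hia, Or.inr hj⟩, hj, Equiv.swap_apply_right, Phi_def,
        if_pos ⟨hia, Or.inl rfl⟩, Equiv.swap_apply_left]
  · by_cases h2 : b < j ∧ (i = a ∨ i = b)
    · obtain ⟨hbj, hi | hi⟩ := h2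
      · rw [Phi_def a b i j, if_neg h1, if_pos ⟨hbj, Or.inl hi⟩, hi, Equiv.swap_apply_left,
          Phi_def, if_neg (fun h => absurd h.1 (not_lt.2 hab.le)), if_pos ⟨hbj, Or.inr rfl⟩,
          Equiv.swap_apply_right]
      · rw [Phi_def a b i j, if_neg h1, if_pos ⟨hbj, Or.inr hi⟩, hi, Equiv.swap_apply_right,
          Phi_def, if_neg (fun h => absurd h.1 (lt_irrefl a)), if_pos ⟨hbj, Or.inl rfl⟩,
          Equiv.swap_apply_left]
    · rw [Phi_def a b i j, if_neg h1, if_neg h2, Phi_def, if_neg h1, if_neg h2]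

lemma key {n : ℕ} (v : Equiv.Perm (Fin n)) (a b : Fin n) (hab : a < b) (hv : v a < v b) :
    invLength v < invLength (v * Equiv.swap a b) := by
  classical
  set A := Finset.univ.filter fun p : Fin n × Fin n => p.1 < p.2 ∧ v p.2 < v p.1 with hA
  set B := Finset.univ.filter
    (fun p : Fin n × Fin n => p.1 < p.2 ∧ (v * Equiv.swap a b) p.2 < (v * Equiv.swap a b) p.1)
    with hB
  have hBmem : ∀ x y : Fin n, x < y → v (Equiv.swap a b y) < v (Equiv.swap a b x) →
      ((x, y) : Fin n × Fin n) ∈ B := by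
    intro x y h1 h2
    simp only [hB, Finset.mem_filter, Finset.mem_univ, true_and, Equiv.Perm.mul_apply]
    exact (Finset.mem_filter.2 ⟨Finset.mem_univ _, h1, h2⟩ : ((x, y) : Fin n × Fin n) ∈ B)
  have hab_not : (a, b) ∉ A := by
    simp only [hA, Finset.mem_filter, Finset.mem_univ, true_and, not_and]
    exact fun _ => not_lt.2 hv.le
  have hmem : ∀ p ∈ insert (a, b) A, Phi a b p ∈ B := by
    intro p hp
    obtain ⟨i, j⟩ := p
    rcases Finset.mem_insert.1 hp with heq | hpA
    · injection heq with e1 e2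
      subst e1; subst e2
      rw [Phi_def, if_neg (fun h => absurd h.1 (lt_irrefl i)),
        if_neg (fun h => absurd h.1 (lt_irrefl j))]
      refine hBmem i j hab ?_
      rw [Equiv.swap_apply_right, Equiv.swap_apply_left]; exact hv
    · simp only [hA, Finset.mem_filter, Finset.mem_univ, true_and] at hpA
      obtain ⟨hij, hinv⟩ := hpA
      by_cases h1 : i < a ∧ (j = a ∨ j = b)
      · obtain ⟨hia, hj | hj⟩ := h1
        · rw [Phi_def, if_pos ⟨hia, Or.inl hj⟩, hj, Equiv.swap_apply_left]
          refine hBmem i b (hia.trans hab) ?_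
          rw [Equiv.swap_apply_right,
            Equiv.swap_apply_of_ne_of_ne hia.ne (hia.trans hab).ne]
          rw [hj] at hinv; exact hinv
        · rw [Phi_def, if_pos ⟨hia, Or.inr hj⟩, hj, Equiv.swap_apply_right]
          refine hBmem i a hia ?_
          rw [Equiv.swap_apply_left,
            Equiv.swap_apply_of_ne_of_ne hia.ne (hia.trans hab).ne]
          rw [hj] at hinv; exact hinv
      · by_cases h2 : b < j ∧ (i = a ∨ i = b)
        · obtain ⟨hbj, hi | hi⟩ := h2
          · rw [Phi_def, if_neg h1, if_pos ⟨hbj, Or.inl hi⟩, hi, Equiv.swap_apply_left]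
            refine hBmem b j hbj ?_
            rw [Equiv.swap_apply_right,
              Equiv.swap_apply_of_ne_of_ne (hab.trans hbj).ne' hbj.ne']
            rw [hi] at hinv; exact hinv
          · rw [Phi_def, if_neg h1, if_pos ⟨hbj, Or.inr hi⟩, hi, Equiv.swap_apply_right]
            refine hBmem a j (hab.trans hbj) ?_
            rw [Equiv.swap_apply_left,
              Equiv.swap_apply_of_ne_of_ne (hab.trans hbj).ne' hbj.ne']
            rw [hi] at hinv; exact hinv
        · rw [Phi_def, if_neg h1, if_neg h2]
          refine hBmem i j hij ?_
          by_cases hja : j = a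
          · exact absurd ⟨hja ▸ hij, Or.inl hja⟩ h1
          by_cases hjb : j = b
          · have hia : ¬ i < a := fun h => h1 ⟨h, Or.inr hjb⟩
            rcases eq_or_lt_of_le (not_lt.1 hia) with hieq | haib
            · rw [hjb] at hinv
              rw [← hieq] at hinv
              exact absurd hinv (not_lt.2 hv.le)
            · rw [hjb, Equiv.swap_apply_right,
                Equiv.swap_apply_of_ne_of_ne haib.ne' (hjb ▸ hij).ne]
              rw [hjb] at hinv
              exact hv.trans hinv
          · rw [Equiv.swap_apply_of_ne_of_ne hja hjb]
            by_cases hia : i = a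
            · rw [hia, Equiv.swap_apply_left]
              rw [hia] at hinv
              exact hinv.trans hv
            by_cases hib : i = b
            · exact absurd ⟨hib ▸ hij, Or.inr hib⟩ h2
            · rw [Equiv.swap_apply_of_ne_of_ne hia hib]
              exact hinv
  have hinj : Set.InjOn (Phi a b) (insert (a, b) A : Finset _) := by
    intro p _ q _ h
    have h2 := Phi_invol a b hab p
    rw [h, Phi_invol a b hab q] at h2
    exact h2.symm
  have hcard := Finset.card_le_card_of_injOn (Phi a b) hmem hinj
  rw [Finset.card_insert_of_notMem hab_not] at hcard
  calc invLength v < invLength v + 1 := Nat.lt_succ_self _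
    _ ≤ _ := hcard

lemma chainProd_nil {n : ℕ} (w : Equiv.Perm (Fin n)) : chainProd w [] = w := by
  simp [chainProd]

lemma chainProd_cons {n : ℕ} (w : Equiv.Perm (Fin n)) (p : Fin n × Fin n)
    (L : List (Fin n × Fin n)) :
    chainProd w (p :: L) = chainProd (w * Equiv.swap p.1 p.2) L := by
  simp [chainProd, mul_assoc]

lemma step_dir {n : ℕ} (v : Equiv.Perm (Fin n)) (a b : Fin n) (hab : a < b)
    (h : invLength (v * Equiv.swap a b) = invLength v + 1) : v a < v b := by
  rcases lt_trichotomy (v a) (v b) with h' | h' | h'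
  · exact h'
  · exact absurd (v.injective h') hab.ne
  · exfalso
    have h2 : (v * Equiv.swap a b) a < (v * Equiv.swap a b) b := by
      simp only [Equiv.Perm.mul_apply, Equiv.swap_apply_left, Equiv.swap_apply_right]
      exact h'
    have h3 := key (v * Equiv.swap a b) a b hab h2
    rw [mul_assoc, Equiv.swap_mul_self, mul_one, h] at h3
    omega

lemma main_ind {n m : ℕ} : ∀ (L : List (Fin n × Fin n)) (w u : Equiv.Perm (Fin n)),
    IsMChain m w u L → (L.map Prod.snd).Nodup →
    ∀ b : Fin n, m ≤ (b : ℕ) →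
      (b ∈ L.map Prod.snd → u b < w b) ∧ (b ∉ L.map Prod.snd → u b = w b) := by
  intro L
  induction L with
  | nil =>
    intro w u hL _ b _
    have : u = w := by rw [hL.2.1, chainProd_nil]
    subst this
    exact ⟨fun h => absurd h (by simp), fun _ => rfl⟩
  | cons p L' ih =>
    intro w u hL hnd b hmb
    obtain ⟨a, c⟩ := p
    obtain ⟨hbound, hu, hlen⟩ := hL
    have hac_m : (a : ℕ) < m ∧ m ≤ (c : ℕ) := hbound (a, c) List.mem_cons_self
    have hac : a < c := by
      rw [Fin.lt_def]; omega
    have hstep : invLength (w * Equiv.swap a c) = invLength w + 1 := by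
      have := hlen 1 (by simp)
      simpa [chainProd, List.take] using this
    have hwac : w a < w c := step_dir w a c hac hstep
    set w' := w * Equiv.swap a c with hw'
    have hchain' : IsMChain m w' u L' := by
      refine ⟨fun q hq => hbound q (List.mem_cons_of_mem _ hq), ?_, ?_⟩
      · rw [hu, chainProd_cons]
      · intro i hi
        have := hlen (i + 1) (by simpa using Nat.succ_le_succ hi)
        rw [List.take_succ_cons, chainProd_cons] at this
        rw [this, hstep]
        omega
    have hnd' : (L'.map Prod.snd).Nodup := (List.nodup_cons.1 hnd).2
    have hcnot : c ∉ L'.map Prod.snd := by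
      have := (List.nodup_cons.1 hnd).1
      simpa using this
    have ihb := ih w' u hchain' hnd' b hmb
    have hbna : b ≠ a := by
      intro h; rw [h] at hmb; omega
    by_cases hbc : b = c
    · subst hbc
      have hw'b : w' b = w a := by
        rw [hw', Equiv.Perm.mul_apply, Equiv.swap_apply_right]
      have hub : u b = w a := by
        rw [ihb.2 hcnot, hw'b]
      constructor
      · intro _
        rw [hub]; exact hwac
      · intro h
        exact absurd (by simp : b ∈ ((a, b) :: L').map Prod.snd) h
    · have hw'b : w' b = w b := by
        rw [hw', Equiv.Perm.mul_apply, Equiv.swap_apply_of_ne_of_ne hbna hbc]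
      have hmem_iff : b ∈ ((a, c) :: L').map Prod.snd ↔ b ∈ L'.map Prod.snd := by
        simp [hbc]
      constructor
      · intro h
        rw [← hw'b]
        exact ihb.1 (hmem_iff.1 h)
      · intro h
        rw [← hw'b]
        exact ihb.2 (fun h' => h (hmem_iff.2 h'))

/-- a chain with distinct `bᵢ` witnessing `w →^{r_m} u` satisfies
`{b : m < b ≤ n, w(b) > u(b)} = {b₁,…,bₛ}`, a set of `s = ℓ(u) − ℓ(w)` elements. -/
theorem stmt1 (n m : ℕ) (hn : 1 ≤ n) (hm : 1 ≤ m) (hmn : m < n)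
    (w u : Equiv.Perm (Fin n)) (L : List (Fin n × Fin n))
    (hL : IsMChain m w u L) (hb : (L.map Prod.snd).Nodup) :
    (Finset.univ.filter fun b : Fin n => m ≤ (b : ℕ) ∧ u b < w b)
      = (L.map Prod.snd).toFinset ∧
    (Finset.univ.filter fun b : Fin n => m ≤ (b : ℕ) ∧ u b < w b).card
      = invLength u - invLength w := by
  have hmain := main_ind L w u hL hb
  have hset : (Finset.univ.filter fun b : Fin n => m ≤ (b : ℕ) ∧ u b < w b)
      = (L.map Prod.snd).toFinset := by
    ext x
    simp only [Finset.mem_filter, Finset.mem_univ, true_and, List.mem_toFinset]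
    constructor
    · rintro ⟨hmx, hlt⟩
      by_contra h
      rw [(hmain x hmx).2 h] at hlt
      exact lt_irrefl _ hlt
    · intro hx
      have hmx : m ≤ (x : ℕ) := by
        obtain ⟨p, hp, rfl⟩ := List.mem_map.1 hx
        exact (hL.1 p hp).2
      exact ⟨hmx, (hmain x hmx).1 hx⟩
  refine ⟨hset, ?_⟩
  rw [hset, List.card_toFinset, List.dedup_eq_self.2 hb, List.length_map]
  have hlen := hL.2.2 L.length le_rfl
  rw [List.take_length, ← hL.2.1] at hlen
  omega
end

section
/- Let n ≥ 1, let 1 ≤ m < n, and let w, u be permutations of {1,2,…,n} such that w →^{r_m} u, witnessed by pairs (a_1,b_1),…,(a_s,b_s) with s = ℓ(u) − ℓ(w), a_i ≤ m < b_i, b_1,…,b_s pairwise distinct, u = wτ_{a_1b_1}⋯τ_{a_sb_s}, and ℓ(wτ_{a_1b_1}⋯τ_{a_ib_i}) = ℓ(w) + i for all i. If b satisfies m < b ≤ n and w(b) > u(b), then there is a unique index i with 1 ≤ i ≤ s and b = b_i, and for this i one has u(a_i) ≥ w(b). -/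
section Aux

variable {n : ℕ}

/-- KEY LEMMA: right-multiplying by `swap a b` with `a < b` and `w b < w a`
strictly decreases the inversion number. -/
theorem key_lt (w : Equiv.Perm (Fin n)) (a b : Fin n) (hab : a < b) (hw : w b < w a) :
    invLength (w * Equiv.swap a b) < invLength w := by
  classical
  set τ := Equiv.swap a b with hτ
  set A : Finset (Fin n × Fin n) :=
    Finset.univ.filter fun p : Fin n × Fin n => p.1 < p.2 ∧ w p.2 < w p.1 with hA
  set B : Finset (Fin n × Fin n) :=
    Finset.univ.filter fun p : Fin n × Fin n => p.1 < p.2 ∧ (w * τ) p.2 < (w * τ) p.1 with hB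
  have hmemA : ∀ p : Fin n × Fin n, p ∈ A ↔ p.1 < p.2 ∧ w p.2 < w p.1 := by
    intro p; simp [hA]
  have hmemB : ∀ p : Fin n × Fin n, p ∈ B ↔ p.1 < p.2 ∧ w (τ p.2) < w (τ p.1) := by
    intro p; rw [hB, Finset.mem_filter]; simp [Equiv.Perm.mul_apply]
  -- the injection
  set F : Fin n × Fin n → Fin n × Fin n :=
    fun x => if τ x.1 < τ x.2 then (τ x.1, τ x.2) else x with hF
  have hab' : a ≠ b := ne_of_lt hab
  have habmem : (a, b) ∈ A := (hmemA _).2 ⟨hab, hw⟩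
  have hmaps : ∀ x ∈ B, F x ∈ A.erase (a, b) := by
    intro x hx
    obtain ⟨hlt, hwlt⟩ := (hmemB x).1 hx
    by_cases h : τ x.1 < τ x.2
    · have hFx : F x = (τ x.1, τ x.2) := if_pos h
      rw [hFx]
      refine Finset.mem_erase.2 ⟨?_, (hmemA _).2 ⟨h, hwlt⟩⟩
      intro hc
      have h1 : τ x.1 = a := congrArg Prod.fst hc
      have h2 : τ x.2 = b := congrArg Prod.snd hc
      have : x.1 = b := by
        have := congrArg τ h1; simpa [hτ, Equiv.swap_apply_right] using this
      have hx2 : x.2 = a := by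
        have := congrArg τ h2; simpa [hτ, Equiv.swap_apply_left] using this
      rw [this, hx2] at hlt
      exact absurd hlt (not_lt.2 hab.le)
    · have hFx : F x = x := if_neg h
      rw [hFx]
      have hne : τ x.1 ≠ τ x.2 := fun hc => absurd (τ.injective hc) (ne_of_lt hlt)
      have hflip : τ x.2 < τ x.1 := lt_of_le_of_ne (not_lt.1 h) hne.symm
      by_cases h1a : x.1 = a
      · by_cases h2b : x.2 = b
        · exfalso
          rw [h1a, h2b] at hwlt
          simp only [hτ, Equiv.swap_apply_left, Equiv.swap_apply_right] at hwlt
          exact absurd hw (not_lt.2 hwlt.le)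
        · have h2a : x.2 ≠ a := by rw [h1a] at hlt; exact (ne_of_lt hlt).symm
          have hτ2 : τ x.2 = x.2 := Equiv.swap_apply_of_ne_of_ne h2a h2b
          have hτ1 : τ x.1 = b := by rw [h1a]; exact Equiv.swap_apply_left a b
          rw [hτ1, hτ2] at hwlt
          have hv : w x.2 < w x.1 := by rw [h1a]; exact hwlt.trans hw
          exact Finset.mem_erase.2 ⟨fun hc => h2b (congrArg Prod.snd hc), (hmemA _).2 ⟨hlt, hv⟩⟩
      · by_cases h1b : x.1 = b
        · exfalso
          have h2a : x.2 ≠ a := fun hc => by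
            rw [h1b, hc] at hlt; exact absurd (hab.trans hlt) (lt_irrefl a)
          have h2b : x.2 ≠ b := by rw [h1b] at hlt; exact (ne_of_lt hlt).symm
          have hτ2 : τ x.2 = x.2 := Equiv.swap_apply_of_ne_of_ne h2a h2b
          have hτ1 : τ x.1 = a := by rw [h1b]; exact Equiv.swap_apply_right a b
          rw [hτ1, hτ2] at hflip
          rw [h1b] at hlt
          exact absurd (hab.trans hlt) (not_lt.2 hflip.le)
        · have hτ1 : τ x.1 = x.1 := Equiv.swap_apply_of_ne_of_ne h1a h1b
          by_cases h2a : x.2 = a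
          · exfalso
            have hτ2 : τ x.2 = b := by rw [h2a]; exact Equiv.swap_apply_left a b
            rw [hτ1, hτ2] at hflip
            rw [h2a] at hlt
            exact absurd (hlt.trans hab) (not_lt.2 hflip.le)
          · by_cases h2b : x.2 = b
            · have hτ2 : τ x.2 = a := by rw [h2b]; exact Equiv.swap_apply_right a b
              rw [hτ1, hτ2] at hwlt
              refine Finset.mem_erase.2 ⟨?_, (hmemA _).2 ⟨hlt, by rw [h2b]; exact hw.trans hwlt⟩⟩
              intro hc
              exact h1a (congrArg Prod.fst hc)
            · exfalso
              have hτ2 : τ x.2 = x.2 := Equiv.swap_apply_of_ne_of_ne h2a h2b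
              rw [hτ1, hτ2] at hflip
              exact absurd hlt (not_lt.2 hflip.le)
  have hinj : Set.InjOn F B := by
    intro x hx y hy hxy
    obtain ⟨hltx, _⟩ := (hmemB x).1 hx
    obtain ⟨hlty, _⟩ := (hmemB y).1 hy
    by_cases h1 : τ x.1 < τ x.2 <;> by_cases h2 : τ y.1 < τ y.2
    · rw [hF] at hxy
      simp only [if_pos h1, if_pos h2] at hxy
      have e1 : τ x.1 = τ y.1 := congrArg Prod.fst hxy
      have e2 : τ x.2 = τ y.2 := congrArg Prod.snd hxy
      exact Prod.ext (τ.injective e1) (τ.injective e2)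
    · exfalso
      rw [hF] at hxy
      simp only [if_pos h1, if_neg h2] at hxy
      have e1 : τ x.1 = y.1 := congrArg Prod.fst hxy
      have e2 : τ x.2 = y.2 := congrArg Prod.snd hxy
      rw [← e1, ← e2] at h2
      simp only [hτ, Equiv.swap_apply_self] at h2
      exact h2 hltx
    · exfalso
      rw [hF] at hxy
      simp only [if_neg h1, if_pos h2] at hxy
      have e1 : x.1 = τ y.1 := congrArg Prod.fst hxy
      have e2 : x.2 = τ y.2 := congrArg Prod.snd hxy
      rw [e1, e2] at h1
      simp only [hτ, Equiv.swap_apply_self] at h1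
      exact h1 hlty
    · rw [hF] at hxy
      simp only [if_neg h1, if_neg h2] at hxy
      exact hxy
  calc invLength (w * τ) = B.card := rfl
    _ = (B.image F).card := (Finset.card_image_of_injOn hinj).symm
    _ ≤ (A.erase (a, b)).card := Finset.card_le_card (by
        intro y hy
        obtain ⟨x, hx, rfl⟩ := Finset.mem_image.1 hy
        exact hmaps x hx)
    _ < A.card := Finset.card_erase_lt_of_mem habmem

theorem chainProd_take_succ (w : Equiv.Perm (Fin n)) (L : List (Fin n × Fin n))
    (k : ℕ) (hk : k < L.length) :
    chainProd w (L.take (k + 1)) =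
      chainProd w (L.take k) * Equiv.swap (L.get ⟨k, hk⟩).1 (L.get ⟨k, hk⟩).2 := by
  unfold chainProd
  rw [← List.take_concat_get (l := L) (i := k) hk, List.concat_eq_append, List.map_append, List.prod_append]
  simp [mul_assoc]

theorem prod_fix (M : List (Fin n × Fin n)) (b : Fin n)
    (h : ∀ p ∈ M, p.1 ≠ b ∧ p.2 ≠ b) :
    (M.map fun p => Equiv.swap p.1 p.2).prod b = b := by
  induction M with
  | nil => simp
  | cons p t ih =>
    simp only [List.map_cons, List.prod_cons, Equiv.Perm.mul_apply]
    rw [ih (fun q hq => h q (List.mem_cons_of_mem _ hq)),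
      Equiv.swap_apply_of_ne_of_ne (h p List.mem_cons_self).1.symm
        (h p List.mem_cons_self).2.symm]

theorem step_lt {m : ℕ} (w u : Equiv.Perm (Fin n)) (L : List (Fin n × Fin n))
    (hL : IsMChain m w u L) (k : ℕ) (hk : k < L.length) :
    chainProd w (L.take k) (L.get ⟨k, hk⟩).1 < chainProd w (L.take k) (L.get ⟨k, hk⟩).2 := by
  obtain ⟨hab, -, hlen⟩ := hL
  set p := L.get ⟨k, hk⟩ with hp
  have hpmem : p ∈ L := List.get_mem L ⟨k, hk⟩
  have hpm := hab p hpmem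
  have hplt : p.1 < p.2 := by
    have h' : (p.1 : ℕ) < (p.2 : ℕ) := lt_of_lt_of_le hpm.1 hpm.2
    exact h'
  have h1 := hlen k (le_of_lt hk)
  have h2 := hlen (k + 1) hk
  rw [chainProd_take_succ w L k hk] at h2
  rcases lt_trichotomy (chainProd w (L.take k) p.1) (chainProd w (L.take k) p.2) with h | h | h
  · exact h
  · exact absurd ((chainProd w (L.take k)).injective h) (ne_of_lt hplt)
  · exfalso
    have := key_lt (chainProd w (L.take k)) p.1 p.2 hplt h
    rw [← hp] at h2
    omega

end Aux

/-- given a chain with distinct `bᵢ` witnessing `w →^{r_m} u`,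
if `m < b ≤ n` and `w(b) > u(b)`, then there is a unique index `i` with `b = bᵢ`,
and for this `i` one has `u(aᵢ) ≥ w(b)`. -/
theorem stmt6 (n m : ℕ) (hn : 1 ≤ n) (hm : 1 ≤ m) (hmn : m < n)
    (w u : Equiv.Perm (Fin n)) (L : List (Fin n × Fin n))
    (hL : IsMChain m w u L) (hb : (L.map Prod.snd).Nodup) :
    ∀ b : Fin n, m ≤ (b : ℕ) → u b < w b →
      ∃ i : Fin L.length, (L.get i).2 = b ∧
        (∀ j : Fin L.length, (L.get j).2 = b → j = i) ∧
        w b ≤ u (L.get i).1 := by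
  intro b hmb hub
  obtain ⟨haL, huL, hlen⟩ := hL
  -- fst entries are never b
  have hfst : ∀ p ∈ L, p.1 ≠ b := by
    intro p hp hc
    have := (haL p hp).1
    rw [hc] at this
    omega
  -- uniqueness of indices with given snd
  have huniq : ∀ i j : Fin L.length, (L.get i).2 = (L.get j).2 → i = j := by
    intro i j hij
    have hi : (i : ℕ) < (L.map Prod.snd).length := by simp [i.isLt]
    have hj : (j : ℕ) < (L.map Prod.snd).length := by simp [j.isLt]
    have h1 : (L.map Prod.snd)[(i : ℕ)] = (L.map Prod.snd)[(j : ℕ)] := by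
      simp only [List.getElem_map]
      simpa [List.get_eq_getElem] using hij
    have := (hb.getElem_inj_iff (hi := hi) (hj := hj)).1 h1
    exact Fin.ext this
  -- existence of an index with snd = b
  have hex : ∃ i : Fin L.length, (L.get i).2 = b := by
    by_contra hne
    push_neg at hne
    have hall : ∀ p ∈ L, p.1 ≠ b ∧ p.2 ≠ b := by
      intro p hp
      refine ⟨hfst p hp, ?_⟩
      obtain ⟨k, hk⟩ := List.mem_iff_get.1 hp
      intro hc
      exact hne k (by rw [hk]; exact hc)
    have : u b = w b := by
      rw [huL]
      unfold chainProd
      rw [Equiv.Perm.mul_apply, prod_fix L b hall]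
    omega
  obtain ⟨i, hi⟩ := hex
  refine ⟨i, hi, fun j hj => huniq j i (by rw [hi, hj]), ?_⟩
  -- value at position b is untouched before step i
  have hval : ∀ k : ℕ, k ≤ (i : ℕ) → chainProd w (L.take k) b = w b := by
    intro k hk
    induction k with
    | zero => simp [chainProd]
    | succ k ih =>
      have hki : k < (i : ℕ) := hk
      have hkL : k < L.length := lt_trans hki i.isLt
      rw [chainProd_take_succ w L k hkL, Equiv.Perm.mul_apply]
      have h2 : (L.get ⟨k, hkL⟩).2 ≠ b := by
        intro hc
        have : (⟨k, hkL⟩ : Fin L.length) = i := huniq _ i (by rw [hi, hc])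
        have : k = (i : ℕ) := congrArg Fin.val this
        omega
      have h1 : (L.get ⟨k, hkL⟩).1 ≠ b := hfst _ (List.get_mem L ⟨k, hkL⟩)
      rw [Equiv.swap_apply_of_ne_of_ne (Ne.symm h1) (Ne.symm h2)]
      exact ih (le_of_lt hki)
  -- after step k > i, position (L.get i).1 holds a value ≥ w b
  have hmain : ∀ k : ℕ, (i : ℕ) < k → k ≤ L.length →
      w b ≤ chainProd w (L.take k) (L.get i).1 := by
    intro k
    induction k with
    | zero => intro h; omega
    | succ k ih =>
      intro hik hkL'
      have hkL : k < L.length := hkL'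
      rw [chainProd_take_succ w L k hkL, Equiv.Perm.mul_apply]
      rcases Nat.lt_or_ge (i : ℕ) k with hik' | hik'
      · -- inductive step: k > i
        by_cases hpa : (L.get ⟨k, hkL⟩).1 = (L.get i).1
        · rw [← hpa, Equiv.swap_apply_left]
          have hstep := step_lt w u L ⟨haL, huL, hlen⟩ k hkL
          have hih := ih hik' (le_of_lt hkL)
          rw [← hpa] at hih
          exact le_of_lt (lt_of_le_of_lt hih hstep)
        · have hna : (L.get i).1 ≠ (L.get ⟨k, hkL⟩).2 := by
            intro hc
            have ha := (haL _ (List.get_mem L i)).1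
            have hb2 := (haL _ (List.get_mem L ⟨k, hkL⟩)).2
            rw [hc] at ha
            omega
          rw [Equiv.swap_apply_of_ne_of_ne (fun hc => hpa hc.symm) hna]
          exact ih hik' (le_of_lt hkL)
      · -- base step: k = i
        have hki : k = (i : ℕ) := by omega
        have hfin : (⟨k, hkL⟩ : Fin L.length) = i := Fin.ext hki
        rw [hfin, hi, Equiv.swap_apply_left]
        have := hval k (le_of_eq hki)
        rw [this]
  have := hmain L.length i.isLt (le_refl _)
  rw [List.take_length] at this
  rw [huL]
  exact this
end
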